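/- Let $F$ be an admissible generalised quadratic form over $\mathfrak{o}$, i.e. there exist vectors $\mathbf{v}_1,\dots,\mathbf{v}_n\in K^n$ such that $B(\mathbf{v}_i;\mathbf{h})=0$ for all $i$ forces $\mathbf{h}=\mathbf{0}$. Then there exists a constant $C_2>0$, depending only on $F$, such that for every non-zero integral ideal $\mathfrak{b}$ one has $|\mathcal{H}_\mathfrak{b}/({}^{G}\mathfrak{b})^n|\leq C_2\,(\mathrm{N}\,{}^{G}\mathfrak{b})^{n}/(\mathrm{N}\mathfrak{b})^{n}$. -/

import Mathlib

open NumberField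
open scoped BigOperators

/-- The action of `Gal(K/ℚ)` on the ring of integers of `K`. -/
noncomputable def gact (K : Type*) [Field K] [NumberField K]
    (τ : K ≃ₐ[ℚ] K) : (𝓞 K) ≃ₐ[ℤ] (𝓞 K) :=
  galRestrict ℤ ℚ K (𝓞 K) τ

/-- The generalised quadratic form attached to a symmetric coefficient tuple
`c : Fin n → Fin n → Gal(K/ℚ) → Gal(K/ℚ) → 𝓞 K`. -/
noncomputable def gqf {K : Type*} [Field K] [NumberField K] {n : ℕ}
    (c : Fin n → Fin n → (K ≃ₐ[ℚ] K) → (K ≃ₐ[ℚ] K) → 𝓞 K)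
    (x : Fin n → 𝓞 K) : 𝓞 K :=
  ∑ i, ∑ j, ∑ τ : K ≃ₐ[ℚ] K, ∑ τ' : K ≃ₐ[ℚ] K,
    c i j τ τ' * gact K τ (x i) * gact K τ' (x j)

/-- The generalised bilinear form attached to `c`. -/
noncomputable def gbf {K : Type*} [Field K] [NumberField K] {n : ℕ}
    (c : Fin n → Fin n → (K ≃ₐ[ℚ] K) → (K ≃ₐ[ℚ] K) → 𝓞 K)
    (x y : Fin n → 𝓞 K) : 𝓞 K :=
  ∑ i, ∑ j, ∑ τ : K ≃ₐ[ℚ] K, ∑ τ' : K ≃ₐ[ℚ] K,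
    c i j τ τ' * gact K τ (x i) * gact K τ' (y j)

/-- The `G`-invariant ideal `ᴳ𝔟 = ⋂_{τ ∈ G} 𝔟^{τ⁻¹}`. -/
noncomputable def GIdeal {K : Type*} [Field K] [NumberField K]
    (G : Set (K ≃ₐ[ℚ] K)) (𝔟 : Ideal (𝓞 K)) : Ideal (𝓞 K) :=
  ⨅ τ ∈ G, Ideal.map (gact K τ.symm) 𝔟

lemma gbf_add_right {K : Type*} [Field K] [NumberField K] {n : ℕ}
    (c : Fin n → Fin n → (K ≃ₐ[ℚ] K) → (K ≃ₐ[ℚ] K) → 𝓞 K)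
    (a x y : Fin n → 𝓞 K) : gbf c a (x + y) = gbf c a x + gbf c a y := by
  simp [gbf, Pi.add_apply, map_add, mul_add, Finset.sum_add_distrib]

lemma gbf_neg_right {K : Type*} [Field K] [NumberField K] {n : ℕ}
    (c : Fin n → Fin n → (K ≃ₐ[ℚ] K) → (K ≃ₐ[ℚ] K) → 𝓞 K)
    (a x : Fin n → 𝓞 K) : gbf c a (-x) = - gbf c a x := by
  simp [gbf, Pi.neg_apply, map_neg, mul_neg, Finset.sum_neg_distrib]

/-- The subgroup `ℋ_𝔟 = {h ∈ 𝓞ⁿ : 2 B(a; h) ∈ 𝔟 ∀ a}`. -/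
noncomputable def Hsub {K : Type*} [Field K] [NumberField K] {n : ℕ}
    (c : Fin n → Fin n → (K ≃ₐ[ℚ] K) → (K ≃ₐ[ℚ] K) → 𝓞 K)
    (𝔟 : Ideal (𝓞 K)) : AddSubgroup (Fin n → 𝓞 K) where
  carrier := {h | ∀ a, 2 * gbf c a h ∈ 𝔟}
  zero_mem' := by
    intro a
    have : gbf c a (0 : Fin n → 𝓞 K) = 0 := by
      simp [gbf]
    simp [this]
  add_mem' := by
    intro x y hx hy a
    rw [gbf_add_right, mul_add]
    exact Ideal.add_mem _ (hx a) (hy a)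
  neg_mem' := by
    intro x hx a
    rw [gbf_neg_right, mul_neg]
    exact (Ideal.neg_mem_iff _).mpr (hx a)

/-- The subgroup `(ᴳ𝔟)ⁿ ⊆ 𝓞ⁿ`. -/
noncomputable def GIdealPow {K : Type*} [Field K] [NumberField K] (n : ℕ)
    (G : Set (K ≃ₐ[ℚ] K)) (𝔟 : Ideal (𝓞 K)) : AddSubgroup (Fin n → 𝓞 K) :=
  AddSubgroup.pi Set.univ fun _ => (GIdeal G 𝔟).toAddSubgroup

/-- The generalised bilinear form extended to `Kⁿ`. -/
noncomputable def gbfK {K : Type*} [Field K] [NumberField K] {n : ℕ}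
    (c : Fin n → Fin n → (K ≃ₐ[ℚ] K) → (K ≃ₐ[ℚ] K) → 𝓞 K)
    (x y : Fin n → K) : K :=
  ∑ i, ∑ j, ∑ τ : K ≃ₐ[ℚ] K, ∑ τ' : K ≃ₐ[ℚ] K,
    (c i j τ τ' : K) * τ (x i) * τ' (y j)


set_option synthInstance.maxHeartbeats 1000000
set_option maxHeartbeats 2000000

section Aux

variable {K : Type*} [Field K] [NumberField K]

lemma gact_mul' (σ τ : K ≃ₐ[ℚ] K) (x : 𝓞 K) :
    gact K (σ * τ) x = gact K σ (gact K τ x) := by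
  rw [gact, map_mul]; rfl

lemma gact_symm' (τ : K ≃ₐ[ℚ] K) : gact K τ.symm = (gact K τ).symm := by
  have h : τ.symm = τ⁻¹ := rfl
  have h2 : (gact K τ).symm = (gact K τ)⁻¹ := rfl
  rw [h, h2, gact, gact, map_inv]

lemma gact_one' (x : 𝓞 K) : gact K 1 x = x := by
  rw [gact, map_one]; rfl

lemma mem_map_gact_symm_iff (τ : K ≃ₐ[ℚ] K) (𝔟 : Ideal (𝓞 K)) (x : 𝓞 K) :
    x ∈ Ideal.map (gact K τ.symm) 𝔟 ↔ gact K τ x ∈ 𝔟 := by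
  have h1 : Ideal.map (gact K τ.symm) 𝔟
      = Ideal.map ((gact K τ.symm : (𝓞 K) ≃+* (𝓞 K)) : (𝓞 K) →+* (𝓞 K)) 𝔟 := rfl
  rw [h1, Ideal.map_comap_of_equiv, Ideal.mem_comap, gact_symm']
  rfl

lemma mem_GIdeal_iff (G : Set (K ≃ₐ[ℚ] K)) (𝔟 : Ideal (𝓞 K)) (x : 𝓞 K) :
    x ∈ GIdeal G 𝔟 ↔ ∀ τ ∈ G, gact K τ x ∈ 𝔟 := by
  simp only [GIdeal, Ideal.mem_iInf, mem_map_gact_symm_iff]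

lemma GIdeal_ne_bot (G : Set (K ≃ₐ[ℚ] K)) (𝔟 : Ideal (𝓞 K)) (h𝔟 : 𝔟 ≠ ⊥) :
    GIdeal G 𝔟 ≠ ⊥ := by
  obtain ⟨b, hb, hb0⟩ := Submodule.exists_mem_ne_zero_of_ne_bot h𝔟
  set N : 𝓞 K := ∏ σ : K ≃ₐ[ℚ] K, gact K σ b with hN
  have hNfix : ∀ τ : K ≃ₐ[ℚ] K, gact K τ N = N := by
    intro τ
    rw [hN, map_prod]
    rw [← Equiv.prod_comp (Equiv.mulLeft τ) (fun σ => gact K σ b)]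
    exact Finset.prod_congr rfl fun σ _ => (gact_mul' τ σ b).symm
  have hNmem : N ∈ 𝔟 := by
    have : gact K 1 b ∣ N := Finset.dvd_prod_of_mem _ (Finset.mem_univ 1)
    obtain ⟨t, ht⟩ := this
    rw [ht, gact_one']
    exact Ideal.mul_mem_right _ _ hb
  have hN0 : N ≠ 0 := by
    rw [hN]
    apply Finset.prod_ne_zero_iff.mpr
    intro σ _
    simpa using hb0
  intro hbot
  apply hN0
  have hmem : N ∈ GIdeal G 𝔟 := by
    rw [mem_GIdeal_iff]
    intro τ _
    rw [hNfix]
    exact hNmem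
  rwa [hbot, Ideal.mem_bot] at hmem

lemma coe_gbf {n : ℕ} (c : Fin n → Fin n → (K ≃ₐ[ℚ] K) → (K ≃ₐ[ℚ] K) → 𝓞 K)
    (x y : Fin n → 𝓞 K) :
    (algebraMap (𝓞 K) K) (gbf c x y)
      = gbfK c (fun i => algebraMap (𝓞 K) K (x i)) (fun j => algebraMap (𝓞 K) K (y j)) := by
  rw [gbf, gbfK, map_sum]
  refine Finset.sum_congr rfl fun i _ => ?_
  rw [map_sum]
  refine Finset.sum_congr rfl fun j _ => ?_
  rw [map_sum]
  refine Finset.sum_congr rfl fun τ _ => ?_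
  rw [map_sum]
  refine Finset.sum_congr rfl fun τ' _ => ?_
  rw [map_mul, map_mul]
  simp only [gact, algebraMap_galRestrict_apply]

lemma exists_denom (x : K) :
    ∃ (w : 𝓞 K) (d : ℤ), d ≠ 0 ∧ (algebraMap (𝓞 K) K) w = (d : K) * x := by
  have halg : IsAlgebraic ℤ x :=
    (IsFractionRing.isAlgebraic_iff ℤ ℚ K).mpr (IsIntegral.of_finite ℚ x).isAlgebraic
  obtain ⟨d, hd, hint⟩ := halg.exists_integral_multiple
  refine ⟨⟨d • x, hint⟩, d, hd, ?_⟩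
  exact zsmul_eq_mul x d

lemma exists_denom_vec {n : ℕ} (x : Fin n → K) :
    ∃ (W : Fin n → 𝓞 K) (D : ℤ), D ≠ 0 ∧
      ∀ j, (algebraMap (𝓞 K) K) (W j) = (D : K) * x j := by
  choose w d hd hw using fun j => exists_denom (x j)
  refine ⟨fun j => (∏ k ∈ Finset.univ.erase j, d k) • w j, ∏ k, d k,
    Finset.prod_ne_zero_iff.mpr fun k _ => hd k, fun j => ?_⟩
  have : (algebraMap (𝓞 K) K) ((∏ k ∈ Finset.univ.erase j, d k) • w j)
      = ((∏ k ∈ Finset.univ.erase j, d k : ℤ) : K) * (algebraMap (𝓞 K) K) (w j) := by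
    rw [map_zsmul, zsmul_eq_mul]
  rw [this, hw j, ← Finset.mul_prod_erase Finset.univ d (Finset.mem_univ j)]
  push_cast
  ring

lemma gbfK_int_smul_left {n : ℕ}
    (c : Fin n → Fin n → (K ≃ₐ[ℚ] K) → (K ≃ₐ[ℚ] K) → 𝓞 K)
    (m : ℤ) (x y : Fin n → K) :
    gbfK c (fun j => (m : K) * x j) y = (m : K) * gbfK c x y := by
  rw [gbfK, gbfK]
  simp only [Finset.mul_sum]
  refine Finset.sum_congr rfl fun i _ => Finset.sum_congr rfl fun j _ =>
    Finset.sum_congr rfl fun τ _ => Finset.sum_congr rfl fun τ' _ => ?_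
  rw [map_mul, map_intCast]
  ring

end Aux

/-- Let `F` be an admissible generalised quadratic form over
`𝓞 K`, i.e. there are `v₁, …, vₙ ∈ Kⁿ` such that `B(vᵢ; h) = 0` for all `i`
forces `h = 0`.  Then there is a constant `C₂ > 0`, depending only on `F`,
such that `|ℋ_𝔟/(ᴳ𝔟)ⁿ| ≤ C₂ · (N ᴳ𝔟)ⁿ/(N𝔟)ⁿ` for every non-zero integral
ideal `𝔟` (stated multiplied out:
`|ℋ_𝔟/(ᴳ𝔟)ⁿ| · (N𝔟)ⁿ ≤ C₂ · (N ᴳ𝔟)ⁿ`). -/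
theorem relindex_H_le_of_admissible
    (K : Type*) [Field K] [NumberField K] [IsGalois ℚ K] (n : ℕ)
    (c : Fin n → Fin n → (K ≃ₐ[ℚ] K) → (K ≃ₐ[ℚ] K) → 𝓞 K)
    (hsym : ∀ i j τ τ', c i j τ τ' = c j i τ' τ)
    (G : Set (K ≃ₐ[ℚ] K))
    (hG : ∀ i j τ τ', c i j τ τ' ≠ 0 → τ ∈ G ∧ τ' ∈ G)
    (v : Fin n → Fin n → K)
    (hadm : ∀ h : Fin n → K, (∀ i, gbfK c (v i) h = 0) → h = 0) :
    ∃ C₂ : ℕ, 0 < C₂ ∧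
      ∀ 𝔟 : Ideal (𝓞 K), 𝔟 ≠ ⊥ →
        (GIdealPow n G 𝔟).relIndex (Hsub c 𝔟) * Ideal.absNorm 𝔟 ^ n ≤
          C₂ * Ideal.absNorm (GIdeal G 𝔟) ^ n := by
  classical
  choose W D hD hW using fun i => exists_denom_vec (v i)
  -- The integral linear map h ↦ (2 B(W i; h))_i
  let L : (Fin n → 𝓞 K) →+ (Fin n → 𝓞 K) :=
    AddMonoidHom.mk' (fun h i => 2 * gbf c (W i) h)
      (by
        intro x y
        funext i
        show 2 * gbf c (W i) (x + y) = 2 * gbf c (W i) x + 2 * gbf c (W i) y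
        rw [gbf_add_right]
        ring)
  have hLinj : Function.Injective L := by
    rw [injective_iff_map_eq_zero]
    intro h hh
    have hK : ∀ i, gbfK c (v i) (fun j => algebraMap (𝓞 K) K (h j)) = 0 := by
      intro i
      have h2 : (2 : 𝓞 K) * gbf c (W i) h = 0 := congrFun hh i
      have h3 : gbf c (W i) h = 0 :=
        (mul_eq_zero.mp h2).resolve_left two_ne_zero
      have h4 : gbfK c (fun j => algebraMap (𝓞 K) K (W i j))
          (fun j => algebraMap (𝓞 K) K (h j)) = 0 := by
        rw [← coe_gbf, h3, map_zero]
      have h5 : gbfK c (fun j => ((D i : ℤ) : K) * v i j)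
          (fun j => algebraMap (𝓞 K) K (h j)) = 0 := by
        rw [show (fun j => ((D i : ℤ) : K) * v i j)
            = fun j => algebraMap (𝓞 K) K (W i j) from funext fun j => (hW i j).symm]
        exact h4
      rw [gbfK_int_smul_left] at h5
      exact (mul_eq_zero.mp h5).resolve_left (by exact_mod_cast hD i)
    have h0 := hadm _ hK
    funext j
    have := congrFun h0 j
    exact RingOfIntegers.coe_injective (by simpa using this)
  -- The constant C₂ is the index of the range of L
  have hC : L.range.index ≠ 0 := by
    let ι := Module.Free.ChooseBasisIndex ℤ (Fin n → 𝓞 K)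
    let e : (Fin n → 𝓞 K) ≃+ (ι → ℤ) :=
      (Module.Free.chooseBasis ℤ (Fin n → 𝓞 K)).equivFun.toAddEquiv
    let H₁ : AddSubgroup (ι → ℤ) := L.range.map e.toAddMonoidHom
    have hcomap : H₁.comap e.toAddMonoidHom = L.range :=
      AddSubgroup.comap_map_eq_self_of_injective e.injective L.range
    have hidx : L.range.index = H₁.index := by
      rw [← hcomap]
      exact AddSubgroup.index_comap_of_surjective H₁ e.surjective
    rw [hidx, Int.addSubgroup_index_ne_zero_iff]
    exact ⟨((e.addSubgroupMap L.range).symm.trans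
      (AddMonoidHom.ofInjective (f := L) hLinj).symm).trans e⟩
  refine ⟨L.range.index, Nat.pos_of_ne_zero hC, ?_⟩
  intro 𝔟 h𝔟
  set Bn : AddSubgroup (Fin n → 𝓞 K) :=
    AddSubgroup.pi Set.univ (fun _ => 𝔟.toAddSubgroup) with hBndef
  let φ : (Fin n → 𝓞 K) →+ (Fin n → 𝓞 K) ⧸ Bn := (QuotientAddGroup.mk' Bn).comp L
  have hHker : Hsub c 𝔟 ≤ φ.ker := by
    intro h hh
    rw [AddMonoidHom.mem_ker]
    show QuotientAddGroup.mk' Bn (L h) = 0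
    have hLh : L h ∈ Bn := by
      rw [hBndef, AddSubgroup.mem_pi]
      intro i _
      exact hh (W i)
    show QuotientAddGroup.mk' Bn (L h) = 0
    rwa [← AddMonoidHom.mem_ker, QuotientAddGroup.ker_mk']
  have hGnle : GIdealPow n G 𝔟 ≤ Hsub c 𝔟 := by
    intro h hh a
    refine Ideal.mul_mem_left _ 2 ?_
    rw [gbf]
    refine Ideal.sum_mem _ fun i _ => Ideal.sum_mem _ fun j _ =>
      Ideal.sum_mem _ fun τ _ => Ideal.sum_mem _ fun τ' _ => ?_
    by_cases hc : c i j τ τ' = 0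
    · simp [hc]
    · have hτ' := (hG i j τ τ' hc).2
      have hmem : gact K τ' (h j) ∈ 𝔟 :=
        (mem_GIdeal_iff G 𝔟 (h j)).mp (hh j (Set.mem_univ j)) τ' hτ'
      exact Ideal.mul_mem_left _ _ hmem
  have habs : (𝔟.toAddSubgroup).index = Ideal.absNorm 𝔟 := rfl
  have hBn : Bn.index = (Ideal.absNorm 𝔟) ^ n := by
    rw [hBndef, AddSubgroup.index_pi, habs, Finset.prod_const, Finset.card_univ,
      Fintype.card_fin]
  have habsG : ((GIdeal G 𝔟).toAddSubgroup).index = Ideal.absNorm (GIdeal G 𝔟) := rfl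
  have hGn : (GIdealPow n G 𝔟).index = (Ideal.absNorm (GIdeal G 𝔟)) ^ n := by
    rw [show GIdealPow n G 𝔟
        = AddSubgroup.pi Set.univ fun _ => (GIdeal G 𝔟).toAddSubgroup from rfl,
      AddSubgroup.index_pi, habsG, Finset.prod_const, Finset.card_univ, Fintype.card_fin]
  have key : (GIdealPow n G 𝔟).relIndex (Hsub c 𝔟) * (Hsub c 𝔟).index
      = (GIdealPow n G 𝔟).index := AddSubgroup.relIndex_mul_index hGnle
  have hGn0 : (GIdealPow n G 𝔟).index ≠ 0 := by
    rw [hGn]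
    exact pow_ne_zero _ (by
      rw [Ne, Ideal.absNorm_eq_zero_iff]
      exact GIdeal_ne_bot G 𝔟 h𝔟)
  have hH0 : (Hsub c 𝔟).index ≠ 0 := by
    intro h0
    exact hGn0 (by rw [← key, h0, mul_zero])
  have hker_le : φ.ker.index ≤ (Hsub c 𝔟).index :=
    Nat.le_of_dvd (Nat.pos_of_ne_zero hH0) (AddSubgroup.index_dvd_of_le hHker)
  have e1 : Nat.card ((Fin n → 𝓞 K) ⧸ φ.ker) = Nat.card φ.range :=
    Nat.card_congr (QuotientAddGroup.quotientKerEquivRange φ).toEquiv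
  have hcount : Bn.index = φ.range.index * φ.ker.index := by
    calc Bn.index = Nat.card ((Fin n → 𝓞 K) ⧸ Bn) := rfl
      _ = φ.range.index * Nat.card φ.range := (AddSubgroup.index_mul_card φ.range).symm
      _ = φ.range.index * Nat.card ((Fin n → 𝓞 K) ⧸ φ.ker) := by rw [e1]
      _ = φ.range.index * φ.ker.index := rfl
  have hrange_le : φ.range.index ≤ L.range.index := by
    refine Nat.le_of_dvd (Nat.pos_of_ne_zero hC) ?_
    have hre : φ.range = L.range.map (QuotientAddGroup.mk' Bn) :=
      AddMonoidHom.range_comp _ _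
    rw [hre]
    exact AddSubgroup.index_map_dvd _ (QuotientAddGroup.mk'_surjective Bn)
  calc (GIdealPow n G 𝔟).relIndex (Hsub c 𝔟) * Ideal.absNorm 𝔟 ^ n
      = (GIdealPow n G 𝔟).relIndex (Hsub c 𝔟) * Bn.index := by rw [hBn]
    _ ≤ (GIdealPow n G 𝔟).relIndex (Hsub c 𝔟) * (L.range.index * (Hsub c 𝔟).index) := by
        refine Nat.mul_le_mul_left _ ?_
        rw [hcount]
        exact Nat.mul_le_mul hrange_le hker_le
    _ = L.range.index * ((GIdealPow n G 𝔟).relIndex (Hsub c 𝔟) * (Hsub c 𝔟).index) := by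
        ring
    _ = L.range.index * (GIdealPow n G 𝔟).index := by rw [key]
    _ = L.range.index * Ideal.absNorm (GIdeal G 𝔟) ^ n := by rw [hGn]
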